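/- In the Hermitian dilation setup, the matrix H^d = V^d_⊥(V^d_⊥)ᵀE^dV^d satisfies ‖H^d‖_w ≤ (1 + rμ_0)·κ_0. -/

import Mathlib

open Matrix BigOperators

/-- Entrywise max norm: largest absolute value of an entry. -/
noncomputable def matMaxNorm {m n : Type*} [Fintype m] [Fintype n] (M : Matrix m n ℝ) : ℝ :=
  ⨆ i, ⨆ j, |M i j|

/-- Matrix ∞-norm: maximum absolute row sum. -/
noncomputable def matInfNorm {m n : Type*} [Fintype m] [Fintype n] (M : Matrix m n ℝ) : ℝ :=
  ⨆ i, ∑ j, |M i j|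

/-- Matrix 1-norm: maximum absolute column sum. -/
noncomputable def matOneNorm {m n : Type*} [Fintype m] [Fintype n] (M : Matrix m n ℝ) : ℝ :=
  ⨆ j, ∑ i, |M i j|

/-- Euclidean norm of a vector. -/
noncomputable def vec2Norm {n : Type*} [Fintype n] (x : n → ℝ) : ℝ :=
  Real.sqrt (∑ i, (x i) ^ 2)

/-- ℓ∞ norm of a vector. -/
noncomputable def vecSupNorm {n : Type*} [Fintype n] (x : n → ℝ) : ℝ :=
  ⨆ i, |x i|

/-- Spectral norm (operator 2-norm) of a matrix. -/
noncomputable def matSpecNorm {m n : Type*} [Fintype m] [Fintype n] (M : Matrix m n ℝ) : ℝ :=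
  sSup {c : ℝ | ∃ x : n → ℝ, vec2Norm x ≤ 1 ∧ c = vec2Norm (M.mulVec x)}

/-- Coherence of a d × r matrix with orthonormal columns. -/
noncomputable def matCoherence {d r : ℕ} (V : Matrix (Fin d) (Fin r) ℝ) : ℝ :=
  ((d : ℝ) / (r : ℝ)) * ⨆ i, ∑ j, (V i j) ^ 2

/-- Inverse of the positive semidefinite square root of a matrix (junk value otherwise). -/
noncomputable def matInvSqrt {n : Type*} [Fintype n] [DecidableEq n] (S : Matrix n n ℝ) :
    Matrix n n ℝ :=
  letI := Classical.propDecidable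
  if h : S.PosSemidef then
    (h.1.eigenvectorUnitary.1 * diagonal ((↑) ∘ (√·) ∘ h.1.eigenvalues) *
      (star h.1.eigenvectorUnitary : Matrix n n ℝ))⁻¹ else 0

/-- Weighted max-norm for matrices with d₁ + d₂ rows. -/
noncomputable def wMaxNorm {d₁ d₂ : ℕ} {n : Type*} [Fintype n]
    (M : Matrix (Fin d₁ ⊕ Fin d₂) n ℝ) : ℝ :=
  matMaxNorm (Matrix.of fun i j =>
    (Sum.elim (fun _ : Fin d₁ => Real.sqrt d₁) (fun _ : Fin d₂ => Real.sqrt d₂) i) * M i j)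

/-- Huber loss with parameter α. -/
noncomputable def huberLoss (α x : ℝ) : ℝ := if |x| ≤ α then x ^ 2 else 2 * α * |x| - α ^ 2


section AuxLemmas

open Matrix BigOperators

lemma entry_le_matMaxNorm {m n : Type*} [Fintype m] [Fintype n] (M : Matrix m n ℝ)
    (i : m) (j : n) : |M i j| ≤ matMaxNorm M := by
  have h1 : |M i j| ≤ ⨆ j', |M i j'| :=
    le_ciSup (f := fun j' => |M i j'|) (Set.Finite.bddAbove (Set.finite_range _)) j
  exact h1.trans
    (le_ciSup (f := fun i' => ⨆ j', |M i' j'|) (Set.Finite.bddAbove (Set.finite_range _)) i)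

lemma abs_sum_le_sqrt_mul_sqrt {ι : Type*} [Fintype ι] (f g : ι → ℝ) :
    |∑ i, f i * g i| ≤ Real.sqrt (∑ i, f i ^ 2) * Real.sqrt (∑ i, g i ^ 2) := by
  have h := Finset.sum_mul_sq_le_sq_mul_sq Finset.univ f g
  have h2 : |∑ i, f i * g i| = Real.sqrt ((∑ i, f i * g i) ^ 2) := by
    rw [Real.sqrt_sq_eq_abs]
  rw [h2, ← Real.sqrt_mul (Finset.sum_nonneg fun i _ => sq_nonneg _)]
  exact Real.sqrt_le_sqrt h

lemma proj_sum_sq_le {d r : ℕ} (U : Matrix (Fin d) (Fin r) ℝ)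
    (hU : ∀ k l, ∑ b, U b k * U b l = if k = l then (1 : ℝ) else 0)
    (x : Fin d → ℝ) :
    ∑ l, (∑ b, U b l * x b) ^ 2 ≤ ∑ b, (x b) ^ 2 := by
  set c : Fin r → ℝ := fun l => ∑ b, U b l * x b with hc
  set y : Fin d → ℝ := fun b => ∑ l, U b l * c l with hy
  have h1 : ∑ b, x b * y b = ∑ l, c l ^ 2 := by
    calc ∑ b, x b * y b
        = ∑ b, ∑ l, U b l * x b * c l := Finset.sum_congr rfl fun b _ => by
          rw [hy, Finset.mul_sum]
          exact Finset.sum_congr rfl fun l _ => by ring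
      _ = ∑ l, ∑ b, U b l * x b * c l := Finset.sum_comm
      _ = ∑ l, (∑ b, U b l * x b) * c l := Finset.sum_congr rfl fun l _ =>
          (Finset.sum_mul ..).symm
      _ = ∑ l, c l ^ 2 := Finset.sum_congr rfl fun l _ => by
          show c l * c l = c l ^ 2
          rw [sq]
  have h2 : ∑ b, y b ^ 2 = ∑ l, c l ^ 2 := by
    calc ∑ b, y b ^ 2
        = ∑ b, ∑ l, ∑ k, c l * c k * (U b l * U b k) := Finset.sum_congr rfl fun b _ => by
          rw [hy, sq, Finset.sum_mul_sum]
          exact Finset.sum_congr rfl fun l _ => Finset.sum_congr rfl fun k _ => by ring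
      _ = ∑ l, ∑ b, ∑ k, c l * c k * (U b l * U b k) := Finset.sum_comm
      _ = ∑ l, ∑ k, ∑ b, c l * c k * (U b l * U b k) :=
          Finset.sum_congr rfl fun l _ => Finset.sum_comm
      _ = ∑ l, ∑ k, c l * c k * ∑ b, U b l * U b k :=
          Finset.sum_congr rfl fun l _ => Finset.sum_congr rfl fun k _ =>
            (Finset.mul_sum ..).symm
      _ = ∑ l, c l ^ 2 := by
          simp_rw [hU]
          simp [sq]
  have h3 : 0 ≤ ∑ b, (x b - y b) ^ 2 := Finset.sum_nonneg fun b _ => sq_nonneg _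
  have h4 : ∑ b, (x b - y b) ^ 2
      = ∑ b, x b ^ 2 - 2 * ∑ b, x b * y b + ∑ b, y b ^ 2 := by
    rw [Finset.mul_sum, ← Finset.sum_sub_distrib, ← Finset.sum_add_distrib]
    exact Finset.sum_congr rfl fun b _ => by ring
  rw [h1, h2] at h4
  nlinarith [h3, h4]

lemma key_scalar (t : ℝ) (ht : 0 ≤ t) :
    (Real.sqrt 2)⁻¹ * (1 + Real.sqrt t) ≤ 1 + t := by
  have hc : Real.sqrt 2 ^ 2 = 2 := Real.sq_sqrt (by norm_num)
  have hc0 : 0 < Real.sqrt 2 := Real.sqrt_pos.2 (by norm_num)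
  have hs : Real.sqrt t ^ 2 = t := Real.sq_sqrt ht
  have hs0 : 0 ≤ Real.sqrt t := Real.sqrt_nonneg t
  rw [inv_mul_le_iff₀ hc0]
  nlinarith [sq_nonneg (2 * Real.sqrt 2 * Real.sqrt t - 1), sq_nonneg (Real.sqrt 2 - 1)]

lemma block_bound {d r : ℕ} (hd : 0 < d) (hr : 0 < r) {n : Type*} [Fintype n]
    (U : Matrix (Fin d) (Fin r) ℝ) (X : Matrix (Fin d) n ℝ)
    (hU : ∀ k l, ∑ b, U b k * U b l = if k = l then (1 : ℝ) else 0)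
    (μ κ : ℝ) (hμ : matCoherence U ≤ μ) (hκ : Real.sqrt d * matMaxNorm X ≤ κ)
    (a : Fin d) (j : n) :
    Real.sqrt d * |(X - U * (Uᵀ * X)) a j| ≤ (1 + Real.sqrt ((r : ℝ) * μ)) * κ := by
  have hd' : (0:ℝ) < d := by exact_mod_cast hd
  have hr' : (0:ℝ) < r := by exact_mod_cast hr
  set ρ := matMaxNorm X with hρdef
  have hρ : ∀ b, |X b j| ≤ ρ := fun b => entry_le_matMaxNorm X b j
  have ρ0 : 0 ≤ ρ := le_trans (abs_nonneg _) (hρ a)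
  have hκ0 : 0 ≤ κ := le_trans (mul_nonneg (Real.sqrt_nonneg _) ρ0) hκ
  have hsup : ∑ l, U a l ^ 2 ≤ ⨆ i, ∑ l, U i l ^ 2 :=
    le_ciSup (f := fun i => ∑ l, U i l ^ 2) (Set.Finite.bddAbove (Set.finite_range _)) a
  have hS0 : 0 ≤ ⨆ i, ∑ l, U i l ^ 2 :=
    le_trans (Finset.sum_nonneg fun l _ => sq_nonneg _) hsup
  rw [matCoherence] at hμ
  have hμ0 : 0 ≤ μ := le_trans (mul_nonneg (by positivity) hS0) hμ
  have hrow : ∑ l, U a l ^ 2 ≤ (r : ℝ) * μ / d := by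
    rw [le_div_iff₀ hd']
    have h2 := mul_le_mul_of_nonneg_right hμ (le_of_lt hr')
    have e : (d : ℝ) / r * (⨆ i, ∑ l, U i l ^ 2) * r = (⨆ i, ∑ l, U i l ^ 2) * d := by
      field_simp
    rw [e] at h2
    calc (∑ l, U a l ^ 2) * d ≤ (⨆ i, ∑ l, U i l ^ 2) * d :=
          mul_le_mul_of_nonneg_right hsup (le_of_lt hd')
      _ ≤ μ * r := h2
      _ = (r : ℝ) * μ := mul_comm _ _
  have hc2 : ∑ b, X b j ^ 2 ≤ (d : ℝ) * ρ ^ 2 := by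
    calc ∑ b, X b j ^ 2 ≤ ∑ _b : Fin d, ρ ^ 2 := Finset.sum_le_sum fun b _ => by
          have := hρ b
          nlinarith [abs_nonneg (X b j), neg_abs_le (X b j), le_abs_self (X b j)]
      _ = (d : ℝ) * ρ ^ 2 := by simp [Finset.sum_const, nsmul_eq_mul]
  have hcore : |(U * (Uᵀ * X)) a j| ≤ Real.sqrt ((r : ℝ) * μ / d) * (Real.sqrt d * ρ) := by
    have e0 : (U * (Uᵀ * X)) a j = ∑ l, U a l * (∑ b, U b l * X b j) := by
      simp [Matrix.mul_apply, Matrix.transpose_apply]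
    rw [e0]
    calc |∑ l, U a l * (∑ b, U b l * X b j)|
        ≤ Real.sqrt (∑ l, U a l ^ 2) * Real.sqrt (∑ l, (∑ b, U b l * X b j) ^ 2) :=
          abs_sum_le_sqrt_mul_sqrt _ _
      _ ≤ Real.sqrt ((r : ℝ) * μ / d) * Real.sqrt ((d : ℝ) * ρ ^ 2) := by
          apply mul_le_mul (Real.sqrt_le_sqrt hrow) (Real.sqrt_le_sqrt ?_)
            (Real.sqrt_nonneg _) (Real.sqrt_nonneg _)
          exact le_trans (proj_sum_sq_le U hU fun b => X b j) hc2
      _ = Real.sqrt ((r : ℝ) * μ / d) * (Real.sqrt d * ρ) := by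
          rw [Real.sqrt_mul (le_of_lt hd'), Real.sqrt_sq ρ0]
  have hB : |(X - U * (Uᵀ * X)) a j| ≤ ρ + Real.sqrt ((r : ℝ) * μ / d) * (Real.sqrt d * ρ) := by
    rw [Matrix.sub_apply]
    exact (abs_sub _ _).trans (add_le_add (hρ a) hcore)
  have e2 : Real.sqrt ((r : ℝ) * μ / d) * Real.sqrt d = Real.sqrt ((r : ℝ) * μ) := by
    rw [← Real.sqrt_mul (by positivity), div_mul_cancel₀]
    exact ne_of_gt hd'
  calc Real.sqrt d * |(X - U * (Uᵀ * X)) a j|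
      ≤ Real.sqrt d * (ρ + Real.sqrt ((r : ℝ) * μ / d) * (Real.sqrt d * ρ)) :=
        mul_le_mul_of_nonneg_left hB (Real.sqrt_nonneg _)
    _ = (1 + Real.sqrt ((r : ℝ) * μ / d) * Real.sqrt d) * (Real.sqrt d * ρ) := by ring
    _ = (1 + Real.sqrt ((r : ℝ) * μ)) * (Real.sqrt d * ρ) := by rw [e2]
    _ ≤ (1 + Real.sqrt ((r : ℝ) * μ)) * κ := by
        apply mul_le_mul_of_nonneg_left hκ
        positivity

end AuxLemmas

/-- Weighted max-norm bound on H^d (Lemma B.1 of Fan–Wang–Zhong). -/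
theorem dilated_H_weighted_norm_bound
    (d₁ d₂ r : ℕ) (hd₁ : 0 < d₁) (hd₂ : 0 < d₂) (hr : 0 < r) (hrm : r ≤ min d₁ d₂)
    (A E : Matrix (Fin d₁) (Fin d₂) ℝ)
    (σ : Fin (min d₁ d₂) → ℝ) (u : Fin (min d₁ d₂) → Fin d₁ → ℝ)
    (v : Fin (min d₁ d₂) → Fin d₂ → ℝ)
    (hrank : (r : ℕ) ≤ A.rank)
    (hu : ∀ i j, ∑ k, u i k * u j k = if i = j then (1 : ℝ) else 0)
    (hv : ∀ i j, ∑ k, v i k * v j k = if i = j then (1 : ℝ) else 0)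
    (hσpos : ∀ i, 0 ≤ σ i)
    (hσdec : ∀ i j : Fin (min d₁ d₂), i ≤ j → σ j ≤ σ i)
    (hA : ∀ a b, A a b = ∑ k, σ k * u k a * v k b)
    (U : Matrix (Fin d₁) (Fin r) ℝ) (hU : U = Matrix.of fun a k => u (Fin.castLE hrm k) a)
    (V : Matrix (Fin d₂) (Fin r) ℝ) (hV : V = Matrix.of fun b k => v (Fin.castLE hrm k) b)
    (Ar : Matrix (Fin d₁) (Fin d₂) ℝ)
    (hAr : Ar = Matrix.of fun a b => ∑ k : Fin r,
      σ (Fin.castLE hrm k) * u (Fin.castLE hrm k) a * v (Fin.castLE hrm k) b)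
    (μ₀ τ₀ ε₀ κ₀ : ℝ)
    (hμ₀ : μ₀ = max (matCoherence U) (matCoherence V))
    (hτ₀ : τ₀ = max (Real.sqrt ((d₁ : ℝ) / (d₂ : ℝ)) * matInfNorm E)
                    (Real.sqrt ((d₂ : ℝ) / (d₁ : ℝ)) * matOneNorm E))
    (hε₀ : ε₀ = max (Real.sqrt ((d₁ : ℝ) / (d₂ : ℝ)) * matInfNorm (A - Ar))
                    (Real.sqrt ((d₂ : ℝ) / (d₁ : ℝ)) * matOneNorm (A - Ar)))
    (hκ₀ : κ₀ = max (Real.sqrt d₁ * matMaxNorm (E * V))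
                    (Real.sqrt d₂ * matMaxNorm (Eᵀ * U)))
    (Ad Ed : Matrix (Fin d₁ ⊕ Fin d₂) (Fin d₁ ⊕ Fin d₂) ℝ)
    (hAd : Ad = Matrix.fromBlocks 0 A Aᵀ 0)
    (hEd : Ed = Matrix.fromBlocks 0 E Eᵀ 0)
    (Vd : Matrix (Fin d₁ ⊕ Fin d₂) (Fin r ⊕ Fin r) ℝ)
    (hVd : Vd = (Real.sqrt 2)⁻¹ • Matrix.fromBlocks U U V (-V))
    (Vdp : Matrix (Fin d₁ ⊕ Fin d₂) (Fin (d₁ + d₂ - 2 * r)) ℝ)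
    (hVdp1 : Vdpᵀ * Vdp = 1) (hVdp2 : Vdᵀ * Vdp = 0)
    (Lam₁d : Matrix (Fin r ⊕ Fin r) (Fin r ⊕ Fin r) ℝ)
    (hLam₁d : Lam₁d = Matrix.diagonal (Sum.elim
      (fun i : Fin r => σ (Fin.castLE hrm i)) (fun i : Fin r => -σ (Fin.castLE hrm i))))
    (Hd : Matrix (Fin d₁ ⊕ Fin d₂) (Fin r ⊕ Fin r) ℝ)
    (hHd : Hd = Vdp * (Vdpᵀ * Ed * Vd))
    (L₁d : Matrix (Fin r ⊕ Fin r) (Fin r ⊕ Fin r) ℝ)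
    (hL₁d : L₁d = Lam₁d + Vdᵀ * Ed * Vd)
    (L₂d : Matrix (Fin d₁ ⊕ Fin d₂) (Fin d₁ ⊕ Fin d₂) ℝ)
    (hL₂d : L₂d = Vdp * (Vdpᵀ * (Ad + Ed) * Vdp) * Vdpᵀ)
    : wMaxNorm Hd ≤ (1 + (r : ℝ) * μ₀) * κ₀ := by
  have hs0 : (0:ℝ) ≤ (Real.sqrt 2)⁻¹ := by positivity
  have hs2 : (Real.sqrt 2)⁻¹ * (Real.sqrt 2)⁻¹ = 1/2 := by
    rw [← mul_inv, Real.mul_self_sqrt (by norm_num)]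
    norm_num
  -- orthonormality of U and V
  have hUorth : ∀ k l : Fin r, ∑ b, U b k * U b l = if k = l then (1:ℝ) else 0 := by
    intro k l
    rw [hU]
    simp only [Matrix.of_apply]
    rw [hu (Fin.castLE hrm k) (Fin.castLE hrm l)]
    simp [Fin.castLE_inj]
  have hVorth : ∀ k l : Fin r, ∑ b, V b k * V b l = if k = l then (1:ℝ) else 0 := by
    intro k l
    rw [hV]
    simp only [Matrix.of_apply]
    rw [hv (Fin.castLE hrm k) (Fin.castLE hrm l)]
    simp [Fin.castLE_inj]
  have hUo : Uᵀ * U = 1 := by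
    ext k l
    rw [Matrix.mul_apply, Matrix.one_apply]
    simpa [Matrix.transpose_apply] using hUorth k l
  have hVo : Vᵀ * V = 1 := by
    ext k l
    rw [Matrix.mul_apply, Matrix.one_apply]
    simpa [Matrix.transpose_apply] using hVorth k l
  have halfXX : ∀ {m' n' : Type} [Fintype m'] [Fintype n'] (X : Matrix m' n' ℝ),
      (1/2 : ℝ) • (X + X) = X := by
    intro m' n' _ _ X
    rw [smul_add, ← add_smul]
    norm_num
  have hVdo : Vdᵀ * Vd = 1 := by
    rw [hVd, Matrix.transpose_smul, Matrix.smul_mul, Matrix.mul_smul, smul_smul, hs2]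
    rw [Matrix.fromBlocks_transpose, Matrix.fromBlocks_multiply]
    simp only [Matrix.transpose_neg, Matrix.mul_neg, Matrix.neg_mul, neg_neg, hUo, hVo,
      add_neg_cancel, Matrix.fromBlocks_smul, smul_zero]
    rw [← Matrix.fromBlocks_one]
    congr 1 <;> rw [halfXX]
  have hVdpVd : Vdpᵀ * Vd = 0 := by
    have h := congrArg Matrix.transpose hVdp2
    simpa [Matrix.transpose_mul] using h
  have e : (Fin d₁ ⊕ Fin d₂) ≃ (Fin r ⊕ Fin r) ⊕ Fin (d₁ + d₂ - 2 * r) := by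
    apply Fintype.equivOfCardEq
    simp only [Fintype.card_sum, Fintype.card_fin]
    omega
  have hQQ : Matrix.fromRows Vdᵀ Vdpᵀ * Matrix.fromCols Vd Vdp = 1 := by
    rw [Matrix.fromRows_mul_fromCols, hVdo, hVdp2, hVdpVd, hVdp1, Matrix.fromBlocks_one]
  have hfull : Vd * Vdᵀ + Vdp * Vdpᵀ = 1 := by
    have h := (Matrix.fromCols_mul_fromRows_eq_one_comm e Vd Vdp Vdᵀ Vdpᵀ).mpr hQQ
    rwa [Matrix.fromCols_mul_fromRows] at h
  have hproj : Vdp * Vdpᵀ = 1 - Vd * Vdᵀ := by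
    rw [← hfull]
    abel
  have hHd2 : Hd = Ed * Vd - (Vd * Vdᵀ) * (Ed * Vd) := by
    rw [hHd]
    calc Vdp * (Vdpᵀ * Ed * Vd) = (Vdp * Vdpᵀ) * (Ed * Vd) := by
          simp only [Matrix.mul_assoc]
      _ = (1 - Vd * Vdᵀ) * (Ed * Vd) := by rw [hproj]
      _ = Ed * Vd - (Vd * Vdᵀ) * (Ed * Vd) := by
          rw [Matrix.sub_mul, Matrix.one_mul]
  have hVVt : Vd * Vdᵀ = Matrix.fromBlocks (U * Uᵀ) 0 0 (V * Vᵀ) := by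
    rw [hVd, Matrix.transpose_smul, Matrix.smul_mul, Matrix.mul_smul, smul_smul, hs2]
    rw [Matrix.fromBlocks_transpose, Matrix.fromBlocks_multiply]
    simp only [Matrix.transpose_neg, Matrix.mul_neg, Matrix.neg_mul, neg_neg,
      add_neg_cancel, Matrix.fromBlocks_smul, smul_zero]
    rw [halfXX, halfXX]
  have hEdVd : Ed * Vd = (Real.sqrt 2)⁻¹ •
      Matrix.fromBlocks (E * V) (-(E * V)) (Eᵀ * U) (Eᵀ * U) := by
    rw [hEd, hVd, Matrix.mul_smul]
    congr 1
    rw [Matrix.fromBlocks_multiply]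
    simp [Matrix.mul_neg]
  set B₁ : Matrix (Fin d₁) (Fin r) ℝ := E * V - U * (Uᵀ * (E * V)) with hB₁
  set B₂ : Matrix (Fin d₂) (Fin r) ℝ := Eᵀ * U - V * (Vᵀ * (Eᵀ * U)) with hB₂
  have hHd3 : Hd = (Real.sqrt 2)⁻¹ • Matrix.fromBlocks B₁ (-B₁) B₂ B₂ := by
    rw [hHd2, hEdVd, hVVt, Matrix.mul_smul, ← smul_sub]
    congr 1
    rw [Matrix.fromBlocks_multiply]
    simp only [Matrix.zero_mul, Matrix.mul_zero, add_zero, zero_add, Matrix.mul_neg]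
    rw [hB₁, hB₂]
    ext (i | i) (j | j) <;>
      simp [Matrix.fromBlocks, Matrix.sub_apply, Matrix.neg_apply, Matrix.mul_assoc] <;> ring
  -- nonnegativity facts
  have hcohU : matCoherence U ≤ μ₀ := by rw [hμ₀]; exact le_max_left _ _
  have hcohV : matCoherence V ≤ μ₀ := by rw [hμ₀]; exact le_max_right _ _
  have hκU : Real.sqrt d₁ * matMaxNorm (E * V) ≤ κ₀ := by rw [hκ₀]; exact le_max_left _ _
  have hκV : Real.sqrt d₂ * matMaxNorm (Eᵀ * U) ≤ κ₀ := by rw [hκ₀]; exact le_max_right _ _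
  have hμ₀0 : 0 ≤ μ₀ := by
    refine le_trans ?_ hcohU
    rw [matCoherence]
    have h1 : (0:ℝ) ≤ ∑ l, U ⟨0, hd₁⟩ l ^ 2 := Finset.sum_nonneg fun l _ => sq_nonneg _
    have h2 : ∑ l, U ⟨0, hd₁⟩ l ^ 2 ≤ ⨆ i, ∑ l, U i l ^ 2 :=
      le_ciSup (f := fun i => ∑ l, U i l ^ 2)
        (Set.Finite.bddAbove (Set.finite_range _)) ⟨0, hd₁⟩
    exact mul_nonneg (by positivity) (h1.trans h2)
  have hκ₀0 : 0 ≤ κ₀ := by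
    refine le_trans (mul_nonneg (Real.sqrt_nonneg _) ?_) hκU
    exact le_trans (abs_nonneg _) (entry_le_matMaxNorm (E * V) ⟨0, hd₁⟩ ⟨0, hr⟩)
  have ht0 : (0:ℝ) ≤ (r:ℝ) * μ₀ := mul_nonneg (by positivity) hμ₀0
  have keyfin : ∀ x : ℝ, x ≤ (1 + Real.sqrt ((r:ℝ) * μ₀)) * κ₀ →
      (Real.sqrt 2)⁻¹ * x ≤ (1 + (r:ℝ) * μ₀) * κ₀ := by
    intro x hx
    have h1 : (Real.sqrt 2)⁻¹ * x ≤ (Real.sqrt 2)⁻¹ * ((1 + Real.sqrt ((r:ℝ) * μ₀)) * κ₀) :=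
      mul_le_mul_of_nonneg_left hx hs0
    have h2 : (Real.sqrt 2)⁻¹ * ((1 + Real.sqrt ((r:ℝ) * μ₀)) * κ₀)
        = ((Real.sqrt 2)⁻¹ * (1 + Real.sqrt ((r:ℝ) * μ₀))) * κ₀ := by ring
    have h3 := mul_le_mul_of_nonneg_right (key_scalar _ ht0) hκ₀0
    linarith
  have bound₁ : ∀ (a : Fin d₁) (j : Fin r),
      Real.sqrt d₁ * |B₁ a j| ≤ (1 + Real.sqrt ((r:ℝ) * μ₀)) * κ₀ := fun a j =>
    block_bound hd₁ hr U (E * V) hUorth μ₀ κ₀ hcohU hκU a j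
  have bound₂ : ∀ (a : Fin d₂) (j : Fin r),
      Real.sqrt d₂ * |B₂ a j| ≤ (1 + Real.sqrt ((r:ℝ) * μ₀)) * κ₀ := fun a j =>
    block_bound hd₂ hr V (Eᵀ * U) hVorth μ₀ κ₀ hcohV hκV a j
  -- conclude
  haveI : Nonempty (Fin d₁) := ⟨⟨0, hd₁⟩⟩
  haveI : Nonempty (Fin d₂) := ⟨⟨0, hd₂⟩⟩
  haveI : Nonempty (Fin r) := ⟨⟨0, hr⟩⟩
  rw [wMaxNorm, matMaxNorm]
  apply ciSup_le
  intro i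
  apply ciSup_le
  intro j
  simp only [Matrix.of_apply]
  have habs : ∀ (w x : ℝ), 0 ≤ w → |w * ((Real.sqrt 2)⁻¹ * x)|
      = (Real.sqrt 2)⁻¹ * (w * |x|) := by
    intro w x hw
    rw [abs_mul, abs_mul, abs_of_nonneg hw, abs_of_nonneg hs0]
    ring
  rcases i with a | a <;> rcases j with j | j <;>
    simp only [hHd3, Matrix.smul_apply, Matrix.fromBlocks_apply₁₁, Matrix.fromBlocks_apply₁₂,
      Matrix.fromBlocks_apply₂₁, Matrix.fromBlocks_apply₂₂, Sum.elim_inl, Sum.elim_inr,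
      smul_eq_mul, Matrix.neg_apply]
  · rw [habs _ _ (Real.sqrt_nonneg _)]
    exact keyfin _ (bound₁ a j)
  · rw [show (Real.sqrt d₁ * ((Real.sqrt 2)⁻¹ * -B₁ a j)) =
      Real.sqrt d₁ * ((Real.sqrt 2)⁻¹ * (-(B₁ a j))) from by ring,
      habs _ _ (Real.sqrt_nonneg _), abs_neg]
    exact keyfin _ (bound₁ a j)
  · rw [habs _ _ (Real.sqrt_nonneg _)]
    exact keyfin _ (bound₂ a j)
  · rw [habs _ _ (Real.sqrt_nonneg _)]
    exact keyfin _ (bound₂ a j)
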